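/- arXiv:2510.04007 — 3 statements merged into one kernel-verified Lean document; each statement's English description precedes it below -/
import Mathlib

section
/- Let q be a prime power with characteristic p ≠ 3. Then the cubic polynomial f(x) = a₃x³ + a₂x² + a₁x + a₀ ∈ F_q[x] with a₃ ≠ 0 is a permutation polynomial of F_q if and only if a₂² = 3·a₃·a₁ and q ≡ 2 (mod 3). -/
open Polynomial

private lemma cube_inj {F : Type*} [Field F] [Fintype F]
    (hq : Fintype.card F % 3 = 2) : Function.Injective (fun y : F => y ^ 3) := by
  classical
  intro x y hxy
  simp only at hxy
  by_cases hy : y = 0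
  · rw [hy] at hxy ⊢
    exact pow_eq_zero_iff (by norm_num : (3:ℕ) ≠ 0) |>.mp (by simpa using hxy)
  · have hx : x ≠ 0 := by
      intro hx
      rw [hx] at hxy
      exact hy (pow_eq_zero_iff (by norm_num : (3:ℕ) ≠ 0) |>.mp (by simpa using hxy.symm))
    set u : Fˣ := Units.mk0 x hx
    set v : Fˣ := Units.mk0 y hy
    have h1 : u ^ 3 = v ^ 3 := Units.ext (by simpa [u, v, Units.val_pow_eq_pow_val] using hxy)
    have huv : (u * v⁻¹) ^ 3 = 1 := by
      rw [mul_pow, inv_pow, h1, mul_inv_cancel]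
    have hord : orderOf (u * v⁻¹) ∣ 3 := orderOf_dvd_of_pow_eq_one huv
    have h3 : ¬ (3 ∣ Fintype.card Fˣ) := by
      rw [Fintype.card_units]
      have h1 : 1 ≤ Fintype.card F := Fintype.card_pos
      omega
    have hone : orderOf (u * v⁻¹) = 1 := by
      rcases (Nat.Prime.eq_one_or_self_of_dvd (by norm_num) _ hord) with h | h
      · exact h
      · exact absurd (h ▸ orderOf_dvd_card) h3
    have : u = v := mul_inv_eq_one.mp (orderOf_eq_one_iff.mp hone)
    simpa [u, v, Units.ext_iff] using this

private lemma cube_key {F : Type*} [Field F] [Fintype F] (p : ℕ) [Fact p.Prime] [CharP F p]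
    (hp : p ≠ 3) (c : F) :
    Function.Bijective (fun y : F => y ^ 3 + c * y) ↔
      c = 0 ∧ Fintype.card F % 3 = 2 := by
  classical
  have h3 : (3 : F) ≠ 0 := by
    intro h
    have := (CharP.cast_eq_zero_iff F p 3).mp h
    exact hp ((Nat.prime_dvd_prime_iff_eq (Fact.out) (by norm_num)).mp this)
  have hq3 : Fintype.card F % 3 ≠ 0 := by
    obtain ⟨n, hpp, hcard⟩ := FiniteField.card F p
    intro h
    have h1 : (3 : ℕ) ∣ p ^ (n : ℕ) := hcard ▸ Nat.dvd_of_mod_eq_zero h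
    have : (3 : ℕ) ∣ p := Nat.Prime.dvd_of_dvd_pow (by norm_num) h1
    exact hp ((Nat.prime_dvd_prime_iff_eq (by norm_num) hpp).mp this).symm
  constructor
  · intro hbij
    have hc : c = 0 := by
      by_contra hc
      by_cases hp2 : p = 2
      · -- characteristic 2
        have h2 : (2 : F) = 0 := by
          subst hp2; exact CharP.cast_eq_zero F 2
        have hsqinj : Function.Injective (fun y : F => y ^ 2) := by
          intro a b hab
          simp only at hab
          have hz : (a - b) ^ 2 = 0 := by linear_combination hab + (b ^ 2 - a * b) * h2
          exact sub_eq_zero.mp (pow_eq_zero_iff (by norm_num : (2:ℕ) ≠ 0) |>.mp hz)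
        obtain ⟨s, hs⟩ := (Finite.injective_iff_surjective.mp hsqinj) c
        simp only at hs
        have hs0 : s ≠ 0 := by
          intro h; apply hc; rw [← hs, h]; ring
        have heq : s ^ 3 + c * s = 0 ^ 3 + c * 0 := by
          linear_combination s * hs + (c * s) * h2
        exact hs0 (hbij.injective heq)
      · -- odd characteristic
        have hodd : Fintype.card F % 2 = 1 := by
          apply FiniteField.odd_card_of_char_ne_two
          rw [ringChar.eq F p]; exact hp2
        have h2 : (2 : F) ≠ 0 := by
          intro h
          have := (CharP.cast_eq_zero_iff F p 2).mp h
          exact hp2 ((Nat.prime_dvd_prime_iff_eq (Fact.out) (by norm_num)).mp this)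
        obtain ⟨d, s, hab⟩ := FiniteField.exists_root_sum_quadratic
          (f := (X ^ 2 : F[X])) (g := C 3 * X ^ 2 + C c)
          (by compute_degree!) (by compute_degree!) hodd
        simp only [eval_add, eval_mul, eval_pow, eval_C, eval_X] at hab
        by_cases hd : d = 0
        · -- 3s² + c = 0 ; use the pair (s, -2s)
          subst hd
          have hs : s ≠ 0 := by
            intro h; subst h; exact hc (by linear_combination hab)
          have hne : s ≠ -2 * s := by
            intro h
            have h3s : (3 : F) * s = 0 := by linear_combination h
            rcases mul_eq_zero.mp h3s with h' | h'
            · exact h3 h'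
            · exact hs h'
          have heq : s ^ 3 + c * s = (-2 * s) ^ 3 + c * (-2 * s) := by
            linear_combination (3 * s) * hab
          exact hne (hbij.injective heq)
        · -- d ≠ 0 : use the pair (s + d, s - d)
          have hne : s + d ≠ s - d := by
            intro h
            have h2d : (2 : F) * d = 0 := by linear_combination h
            rcases mul_eq_zero.mp h2d with h' | h'
            · exact h2 h'
            · exact hd h'
          have heq : (s + d) ^ 3 + c * (s + d) = (s - d) ^ 3 + c * (s - d) := by
            linear_combination (2 * d) * hab
          exact hne (hbij.injective heq)
    refine ⟨hc, ?_⟩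
    subst hc
    by_contra hq
    have hq1 : Fintype.card F % 3 = 1 := by omega
    have hdvd : 3 ∣ Fintype.card Fˣ := by
      rw [Fintype.card_units]
      have h1 : 1 ≤ Fintype.card F := Fintype.card_pos
      omega
    obtain ⟨ζ, hζ⟩ := exists_prime_orderOf_dvd_card 3 hdvd
    have hζ3 : ζ ^ 3 = 1 := by rw [← hζ]; exact pow_orderOf_eq_one ζ
    have hζ1 : ζ ≠ 1 := by
      intro h; rw [h, orderOf_one] at hζ; norm_num at hζ
    have hval : ((ζ : F)) ^ 3 = 1 := by
      rw [← Units.val_pow_eq_pow_val, hζ3, Units.val_one]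
    have heq : (ζ : F) ^ 3 + 0 * (ζ : F) = (1 : F) ^ 3 + 0 * (1 : F) := by
      rw [hval]; ring
    have := hbij.injective heq
    exact hζ1 (Units.ext (by simpa using this))
  · rintro ⟨hc, hq⟩
    subst hc
    simp only [zero_mul, add_zero]
    exact Finite.injective_iff_bijective.mp (cube_inj hq)

/-- Permutation polynomial criterion for cubics over finite fields of characteristic ≠ 3
(Mullen–Shparlinski style): `a₃x³+a₂x²+a₁x+a₀` with `a₃ ≠ 0` permutes `F_q` iff
`a₂² = 3a₃a₁` and `q ≡ 2 (mod 3)`. -/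
theorem cubic_permutation_polynomial_iff
    {F : Type*} [Field F] [Fintype F] (p : ℕ) [Fact p.Prime] [CharP F p] (hp : p ≠ 3)
    (a₀ a₁ a₂ a₃ : F) (ha₃ : a₃ ≠ 0) :
    Function.Bijective (fun x : F => a₃ * x ^ 3 + a₂ * x ^ 2 + a₁ * x + a₀) ↔
      (a₂ ^ 2 = 3 * a₃ * a₁ ∧ Fintype.card F % 3 = 2) := by
  have h3 : (3 : F) ≠ 0 := by
    intro h
    have := (CharP.cast_eq_zero_iff F p 3).mp h
    exact hp ((Nat.prime_dvd_prime_iff_eq (Fact.out) (by norm_num)).mp this)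
  obtain ⟨m, hm⟩ : ∃ m : F, (3 * a₃) * m = 1 :=
    ⟨(3 * a₃)⁻¹, mul_inv_cancel₀ (mul_ne_zero h3 ha₃)⟩
  obtain ⟨n, hn⟩ : ∃ n : F, a₃ * n = 1 := ⟨a₃⁻¹, mul_inv_cancel₀ ha₃⟩
  set t : F := a₂ * m with ht
  set c : F := a₁ * n - a₂ ^ 2 * m * n with hcdef
  set k : F := a₀ - a₃ * (t ^ 3 + c * t) with hk
  have e1 : a₂ = 3 * a₃ * t := by rw [ht]; linear_combination (-a₂) * hm
  have e2 : a₁ = 3 * a₃ * t ^ 2 + a₃ * c := by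
    rw [ht, hcdef]; linear_combination (-(a₂ ^ 2 * m)) * hm + (a₂ ^ 2 * m - a₁) * hn
  have e3 : a₀ = k + a₃ * t ^ 3 + a₃ * c * t := by rw [hk]; ring
  have hfun : (fun x : F => a₃ * x ^ 3 + a₂ * x ^ 2 + a₁ * x + a₀)
      = (fun z : F => a₃ * z + k) ∘ (fun y : F => y ^ 3 + c * y) ∘ (fun x : F => x + t) := by
    funext x
    simp only [Function.comp_apply]
    rw [e1, e2, e3]; ring
  have hA : Function.Bijective (fun x : F => x + t) := (Equiv.addRight t).bijective
  have hB : Function.Bijective (fun z : F => a₃ * z + k) := by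
    have : (fun z : F => a₃ * z + k) = (fun w : F => w + k) ∘ (fun z : F => a₃ * z) := rfl
    rw [this]
    exact (Equiv.addRight k).bijective.comp (Equiv.mulLeft₀ a₃ ha₃).bijective
  rw [hfun, Function.Bijective.of_comp_iff' hB, Function.Bijective.of_comp_iff _ hA,
    cube_key p hp c]
  have hciff : c = 0 ↔ a₂ ^ 2 = 3 * a₃ * a₁ := by
    constructor
    · intro h
      rw [e1, e2, h]; ring
    · intro h
      rw [e1, e2] at h
      have h0 : (3 * a₃ ^ 2) * c = 0 := by linear_combination -h
      rcases mul_eq_zero.mp h0 with h' | h'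
      · exact absurd h' (mul_ne_zero h3 (pow_ne_zero 2 ha₃))
      · exact h'
  rw [hciff]
end

section
/- For any finite field F_q of odd characteristic, the map η : F_q → F_q defined by η(x) = x³ + x² + x is not a bijection. Consequently, there exists c ∈ F_q such that the polynomial x³ + x² + x + c is irreducible over F_q, provided q ≥ 7. -/
open Polynomial

/-- If `w² = -3a²-2a-3` with `w ≠ 0` (char ≠ 2), then `η` collides at some `y ≠ a`. -/
lemma eta_collision {F : Type*} [Field F] (h2 : (2 : F) ≠ 0) {a w : F}
    (hw : w ^ 2 = -3 * a ^ 2 - 2 * a - 3) (hw0 : w ≠ 0) :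
    ∃ y : F, y ≠ a ∧ y ^ 3 + y ^ 2 + y = a ^ 3 + a ^ 2 + a := by
  have key : ∀ y : F, y ^ 2 + (a + 1) * y + (a ^ 2 + a + 1) = 0 →
      y ^ 3 + y ^ 2 + y = a ^ 3 + a ^ 2 + a := by
    intro y h
    linear_combination (y - a) * h
  set y₁ : F := (-(a + 1) + w) / 2 with hy₁
  set y₂ : F := (-(a + 1) - w) / 2 with hy₂
  have hq₁ : y₁ ^ 2 + (a + 1) * y₁ + (a ^ 2 + a + 1) = 0 := by
    rw [hy₁]; field_simp; linear_combination hw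
  have hq₂ : y₂ ^ 2 + (a + 1) * y₂ + (a ^ 2 + a + 1) = 0 := by
    rw [hy₂]; field_simp; linear_combination hw
  have hne : y₁ ≠ y₂ := by
    rw [hy₁, hy₂]
    intro h
    rw [div_eq_div_iff h2 h2] at h
    have h4 : 2 * (2 * w) = 0 := by linear_combination h
    exact hw0 (((mul_eq_zero.mp ((mul_eq_zero.mp h4).resolve_left h2)).resolve_left h2))
  by_cases h1 : y₁ = a
  · exact ⟨y₂, fun h => hne (h1.trans h.symm), key _ hq₂⟩
  · exact ⟨y₁, h1, key _ hq₁⟩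

/-- Over any finite field of odd characteristic, `x ↦ x³+x²+x` is not a bijection;
consequently (if `q ≥ 7`) there is `c` with `x³+x²+x+c` irreducible over `F_q`. -/
theorem eta_not_bijective_and_exists_irreducible_cubic
    {F : Type*} [Field F] [Fintype F] (p : ℕ) [Fact p.Prime] [CharP F p] (hp : Odd p) :
    ¬ Function.Bijective (fun x : F => x ^ 3 + x ^ 2 + x) ∧
      (7 ≤ Fintype.card F →
        ∃ c : F, Irreducible
          (Polynomial.X ^ 3 + Polynomial.X ^ 2 + Polynomial.X + Polynomial.C c :
            Polynomial F)) := by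
  have hp2 : p ≠ 2 := by rintro rfl; simp [Nat.odd_iff] at hp
  have hchar2 : ringChar F ≠ 2 := by rw [ringChar.eq F p]; exact hp2
  have h2 : (2 : F) ≠ 0 := Ring.two_ne_zero hchar2
  have h8 : (8 : F) ≠ 0 := by
    intro h
    apply h2
    have : (2 : F) ^ 3 = 0 := by norm_num; linear_combination h
    exact pow_eq_zero_iff (by norm_num) |>.mp this
  -- find a collision of η
  have hcoll : ∃ x y : F, x ≠ y ∧ x ^ 3 + x ^ 2 + x = y ^ 3 + y ^ 2 + y := by
    by_cases h3 : (3 : F) = 0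
    · exact ⟨1, 0, one_ne_zero, by norm_num; linear_combination h3⟩
    · have hodd := FiniteField.odd_card_of_char_ne_two hchar2
      have hdegg : (C (3 : F) * X ^ 2 + C 8).degree = 2 := by
        compute_degree!
      obtain ⟨s, u, hsu⟩ := FiniteField.exists_root_sum_quadratic
        (f := (X ^ 2 : F[X])) (g := C 3 * X ^ 2 + C 8) (degree_X_pow 2) hdegg hodd
      simp only [eval_add, eval_mul, eval_pow, eval_X, eval_C] at hsu
      -- hsu : s ^ 2 + (3 * u ^ 2 + 8) = 0
      by_cases hu : u = 0
      · -- then s² = -8, collision at a = 1 with w = s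
        subst hu
        have hs2 : s ^ 2 = -3 * (1:F) ^ 2 - 2 * 1 - 3 := by linear_combination hsu
        have hs0 : s ≠ 0 := by
          intro h; apply h8; subst h; linear_combination hsu
        obtain ⟨y, hy, he⟩ := eta_collision h2 hs2 hs0
        exact ⟨y, 1, hy, he⟩
      · -- general case: a = (s-1)/3, w = u
        have hw : u ^ 2 = -3 * ((s - 1) / 3) ^ 2 - 2 * ((s - 1) / 3) - 3 := by
          field_simp
          linear_combination hsu
        obtain ⟨y, hy, he⟩ := eta_collision h2 hw hu
        exact ⟨y, (s - 1) / 3, hy, he⟩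
  obtain ⟨x, y, hxy, he⟩ := hcoll
  have hnotinj : ¬ Function.Injective (fun x : F => x ^ 3 + x ^ 2 + x) := by
    intro hinj
    exact hxy (hinj he)
  refine ⟨fun h => hnotinj h.1, fun _ => ?_⟩
  have hnsurj : ¬ Function.Surjective (fun x : F => x ^ 3 + x ^ 2 + x) := by
    rw [← Finite.injective_iff_surjective]
    exact hnotinj
  rw [Function.Surjective] at hnsurj
  push_neg at hnsurj
  obtain ⟨b, hb⟩ := hnsurj
  refine ⟨-b, ?_⟩
  have hdeg : (X ^ 3 + X ^ 2 + X + C (-b) : F[X]).natDegree = 3 := by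
    compute_degree!
  rw [Polynomial.irreducible_iff_roots_eq_zero_of_degree_le_three (by omega) (by omega)]
  rw [Multiset.eq_zero_iff_forall_notMem]
  intro r hr
  have hne0 : (X ^ 3 + X ^ 2 + X + C (-b) : F[X]) ≠ 0 := by
    intro h
    rw [h] at hdeg
    simp at hdeg
  rw [mem_roots hne0] at hr
  have := hr
  rw [IsRoot.def] at this
  simp only [eval_add, eval_pow, eval_X, eval_C] at this
  exact hb r (by linear_combination this)
end

section
/- Let q ≥ 7 be a prime power and let M be a subgroup of GL₃(F_q) acting irreducibly on F_q³, such that q² divides |M| and the determinant map det : M → F_q^× is surjective. If M contains a Sylow p-subgroup of GL₃(F_q) (where p is the characteristic of F_q), then M contains SL₃(F_q) and hence M = GL₃(F_q). -/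
set_option linter.unusedSectionVars false
set_option linter.unusedTactic false
set_option linter.unreachableTactic false
set_option maxHeartbeats 1000000
open Matrix

namespace SylowGL
variable {F : Type*} [Field F] [DecidableEq F]


def tgl (v w : Fin 3 → F) (h : w ⬝ᵥ v = 0) : GL (Fin 3) F where
  val := 1 + vecMulVec v w
  inv := 1 - vecMulVec v w
  val_inv := by
    have hsq : vecMulVec v w * vecMulVec v w = 0 := by
      ext i j
      simp [vecMulVec_apply, mul_apply]
      have : ∑ k, v i * w k * (v k * w j) = (w ⬝ᵥ v) * (v i * w j) := by
        simp [dotProduct, Finset.sum_mul, Finset.mul_sum]; congr 1; funext k; ring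
      simpa [h] using this
    rw [mul_sub, add_mul, add_mul, one_mul, mul_one, hsq]
    abel_nf
    simp
  inv_val := by
    have hsq : vecMulVec v w * vecMulVec v w = 0 := by
      ext i j
      simp [vecMulVec_apply, mul_apply]
      have : ∑ k, v i * w k * (v k * w j) = (w ⬝ᵥ v) * (v i * w j) := by
        simp [dotProduct, Finset.sum_mul, Finset.mul_sum]; congr 1; funext k; ring
      simpa [h] using this
    rw [sub_mul, mul_add, mul_add, one_mul, mul_one, hsq]
    abel_nf
    simp

@[simp] lemma tgl_val (v w : Fin 3 → F) (h) :
    (tgl v w h : Matrix (Fin 3) (Fin 3) F) = 1 + vecMulVec v w := rfl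
@[simp] lemma tgl_inv_val (v w : Fin 3 → F) (h) :
    (((tgl v w h)⁻¹ : GL (Fin 3) F) : Matrix (Fin 3) (Fin 3) F) = 1 - vecMulVec v w := rfl

lemma mul_vecMulVec (A : Matrix (Fin 3) (Fin 3) F) (v w : Fin 3 → F) :
    A * vecMulVec v w = vecMulVec (A *ᵥ v) w := by
  ext i j
  simp [vecMulVec_apply, mul_apply, mulVec, dotProduct, Finset.sum_mul]
  congr 1; funext k; ring

lemma vecMulVec_mul (A : Matrix (Fin 3) (Fin 3) F) (v w : Fin 3 → F) :
    vecMulVec v w * A = vecMulVec v (w ᵥ* A) := by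
  ext i j
  simp [vecMulVec_apply, mul_apply, vecMul, dotProduct, Finset.mul_sum]
  congr 1; funext k; ring

lemma conj_tgl_val (g : GL (Fin 3) F) (v w : Fin 3 → F) (h) :
    ((g * tgl v w h * g⁻¹ : GL (Fin 3) F) : Matrix (Fin 3) (Fin 3) F)
      = 1 + vecMulVec ((g : Matrix (Fin 3) (Fin 3) F) *ᵥ v)
          (w ᵥ* ((g⁻¹ : GL (Fin 3) F) : Matrix (Fin 3) (Fin 3) F)) := by
  have e : ((g * tgl v w h * g⁻¹ : GL (Fin 3) F) : Matrix (Fin 3) (Fin 3) F)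
      = (g : Matrix (Fin 3) (Fin 3) F) * (1 + vecMulVec v w) *
          ((g⁻¹ : GL (Fin 3) F) : Matrix (Fin 3) (Fin 3) F) := by
    simp
  rw [e, mul_add, mul_one, add_mul, mul_vecMulVec, vecMulVec_mul]
  congr 1
  rw [← Units.val_mul, mul_inv_cancel, Units.val_one]

lemma mem_of_val_eq {M : Subgroup (GL (Fin 3) F)} {x y : GL (Fin 3) F}
    (hx : x ∈ M) (h : (y : Matrix (Fin 3) (Fin 3) F) = x) : y ∈ M := by
  rwa [Units.ext h]

lemma vecMulVec_mulVec' (v w x : Fin 3 → F) : vecMulVec v w *ᵥ x = (w ⬝ᵥ x) • v := by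
  ext i
  simp [vecMulVec_apply, mulVec, dotProduct, Fin.sum_univ_three]
  ring

lemma vecMul_vecMulVec (v w x : Fin 3 → F) : x ᵥ* vecMulVec v w = (x ⬝ᵥ v) • w := by
  ext j
  simp [vecMulVec_apply, vecMul, dotProduct, Fin.sum_univ_three]
  ring

lemma smul_vecMulVec (s : F) (v w : Fin 3 → F) :
    vecMulVec (s • v) w = s • vecMulVec v w := by
  ext i j; simp [vecMulVec_apply]; ring

lemma vecMulVec_smul (s : F) (v w : Fin 3 → F) :
    vecMulVec v (s • w) = s • vecMulVec v w := by
  ext i j; simp [vecMulVec_apply]; ring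




def uMat (a b c : F) : Matrix (Fin 3) (Fin 3) F := !![1, a, b; 0, 1, c; 0, 0, 1]

lemma uMat_mul (a b c a' b' c' : F) :
    uMat a b c * uMat a' b' c' = uMat (a + a') (b + b' + a * c') (c + c') := by
  ext i j
  fin_cases i <;> fin_cases j <;>
    simp [uMat, mul_apply, Fin.sum_univ_three, Matrix.vecHead, Matrix.vecTail] <;> ring

lemma uMat_inv (a b c : F) : uMat a b c * uMat (-a) (a * c - b) (-c) = 1 := by
  rw [uMat_mul]
  ext i j
  fin_cases i <;> fin_cases j <;> simp [uMat, Matrix.one_apply, Matrix.vecHead, Matrix.vecTail] <;> ring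

def uGL (a b c : F) : GL (Fin 3) F where
  val := uMat a b c
  inv := uMat (-a) (a * c - b) (-c)
  val_inv := uMat_inv a b c
  inv_val := by
    have := uMat_inv (-a) (a * c - b) (-c)
    simpa [neg_neg, mul_comm] using this

@[simp] lemma uGL_val (a b c : F) : (uGL a b c : Matrix (Fin 3) (Fin 3) F) = uMat a b c := rfl

lemma uGL_mul (a b c a' b' c' : F) :
    uGL a b c * uGL a' b' c' = uGL (a + a') (b + b' + a * c') (c + c') :=
  Units.ext (uMat_mul a b c a' b' c')

lemma uGL_one : (uGL 0 0 0 : GL (Fin 3) F) = 1 := by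
  apply Units.ext
  ext i j
  fin_cases i <;> fin_cases j <;> simp [uMat, Matrix.one_apply, Matrix.vecHead, Matrix.vecTail]

lemma uGL_inv (a b c : F) : (uGL a b c)⁻¹ = uGL (-a) (a * c - b) (-c) := by
  apply inv_eq_of_mul_eq_one_right
  rw [uGL_mul, ← uGL_one]
  congr 1 <;> ring

lemma uMat_def (a b c : F) : uMat a b c = !![1, a, b; 0, 1, c; 0, 0, 1] := rfl

def U : Subgroup (GL (Fin 3) F) where
  carrier := {g | ∃ a b c : F, g = uGL a b c}
  one_mem' := ⟨0, 0, 0, uGL_one.symm⟩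
  mul_mem' := by
    rintro x y ⟨a, b, c, rfl⟩ ⟨a', b', c', rfl⟩
    exact ⟨_, _, _, (uGL_mul a b c a' b' c')⟩
  inv_mem' := by
    rintro x ⟨a, b, c, rfl⟩
    exact ⟨_, _, _, uGL_inv a b c⟩

lemma isPGroup_U (p : ℕ) [Fact p.Prime] [CharP F p] : IsPGroup p (U : Subgroup (GL (Fin 3) F)) := by
  intro g
  refine ⟨2, ?_⟩
  obtain ⟨x, a, b, c, rfl⟩ := g
  have hval : (uGL a b c : GL (Fin 3) F) ^ p ^ 2 = 1 := by
    apply Units.ext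
    have : ((uGL a b c : GL (Fin 3) F) ^ p ^ 2 : GL (Fin 3) F).val = (uMat a b c) ^ p ^ 2 := by
      simp [Units.val_pow_eq_pow_val]
    rw [this, Units.val_one]
    set N : Matrix (Fin 3) (Fin 3) F := !![0, a, b; 0, 0, c; 0, 0, 0] with hN
    have hdecomp : uMat a b c = 1 + N := by
      ext i j
      fin_cases i <;> fin_cases j <;> simp [uMat, hN, Matrix.one_apply, Matrix.vecHead, Matrix.vecTail]
    have hN3 : N ^ 3 = 0 := by
      rw [pow_succ, pow_two]
      ext i j
      fin_cases i <;> fin_cases j <;> simp [hN, mul_apply, Fin.sum_univ_three, Matrix.vecHead, Matrix.vecTail]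
    have hcomm : Commute (1 : Matrix (Fin 3) (Fin 3) F) N := Commute.one_left N
    rw [hdecomp, add_pow_char_pow_of_commute _ _ hcomm, one_pow]
    have h3 : 3 ≤ p ^ 2 := by
      have := (Fact.out : p.Prime).two_le
      calc 3 ≤ 2 ^ 2 := by norm_num
      _ ≤ p ^ 2 := Nat.pow_le_pow_left this 2
    have : N ^ p ^ 2 = N ^ 3 * N ^ (p ^ 2 - 3) := by
      rw [← pow_add]; congr 1; omega
    rw [this, hN3, zero_mul, add_zero]
  exact Subtype.ext (by rw [SubmonoidClass.coe_pow]; exact hval)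

section core

variable (M : Subgroup (GL (Fin 3) F))
variable (hirr : ∀ W : Submodule F (Fin 3 → F),
      (∀ g ∈ M, ∀ v ∈ W, Matrix.mulVec (g : Matrix (Fin 3) (Fin 3) F) v ∈ W) →
      W = ⊥ ∨ W = ⊤)
variable (hU : ∀ a b c : F, uGL a b c ∈ M)

include hU in
lemma hT1 (w : Fin 3 → F) (hw : w 0 = 0) (h : w ⬝ᵥ ![1,0,0] = 0) :
    tgl ![1,0,0] w h ∈ M := by
  apply mem_of_val_eq (hU (w 1) (w 2) 0)
  rw [tgl_val, uGL_val, uMat_def]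
  ext i j
  rw [Matrix.add_apply]
  fin_cases i <;> fin_cases j <;>
    simp [vecMulVec_apply, Matrix.one_apply, hw, Matrix.vecHead, Matrix.vecTail]

include hU in
lemma hT2 (v : Fin 3 → F) (hv : v 2 = 0) (h : (![0,0,1] : Fin 3 → F) ⬝ᵥ v = 0) :
    tgl v ![0,0,1] h ∈ M := by
  apply mem_of_val_eq (hU 0 (v 0) (v 1))
  rw [tgl_val, uGL_val, uMat_def]
  ext i j
  fin_cases i <;> fin_cases j <;>
    simp [vecMulVec_apply, Matrix.one_apply, hv, Matrix.vecHead, Matrix.vecTail]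

include hirr in
lemma exists_nonzero31 : ∃ g, g ∈ M ∧
    ((g⁻¹ : GL (Fin 3) F) : Matrix (Fin 3) (Fin 3) F) 2 0 ≠ 0 := by
  by_contra hcon
  push_neg at hcon
  have hall : ∀ g ∈ M, (g : Matrix (Fin 3) (Fin 3) F) 2 0 = 0 := by
    intro g hg
    simpa using hcon g⁻¹ (inv_mem hg)
  let W : Submodule F (Fin 3 → F) :=
    { carrier := {v | ∀ g ∈ M, ((g : Matrix (Fin 3) (Fin 3) F) *ᵥ v) 2 = 0}
      add_mem' := fun {u v} hu hv => by
        intro g hg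
        have h1 := hu g hg; have h2 := hv g hg
        simp [Matrix.mulVec_add, h1, h2]
      zero_mem' := by intro g hg; simp
      smul_mem' := fun s {v} hv => by
        intro g hg
        have h1 := hv g hg
        simp [Matrix.mulVec_smul, h1] }
  have hWinv : ∀ g ∈ M, ∀ v ∈ W, (g : Matrix (Fin 3) (Fin 3) F) *ᵥ v ∈ W := by
    intro g hg v hv h hh
    rw [Matrix.mulVec_mulVec]
    have hmem : (h * g : GL (Fin 3) F) ∈ M := mul_mem hh hg
    simpa [Units.val_mul] using hv (h * g) hmem
  have he0 : (![1,0,0] : Fin 3 → F) ∈ W := by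
    intro g hg
    have := hall g hg
    simp [Matrix.mulVec, dotProduct, Fin.sum_univ_three, this]
  rcases hirr W hWinv with hbot | htop
  · rw [hbot, Submodule.mem_bot] at he0
    have := congrFun he0 0
    simp at this
  · have he2 : (![0,0,1] : Fin 3 → F) ∈ W := htop ▸ Submodule.mem_top
    have := he2 1 (one_mem M)
    simp [Matrix.mulVec, dotProduct, Fin.sum_univ_three] at this

include hirr hU in
lemma all_transvections (v χ : Fin 3 → F) (h : χ ⬝ᵥ v = 0) : tgl v χ h ∈ M := by
  classical
  -- Step A : a functional ψ with ψ 0 ≠ 0 whose transvections all lie in M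
  obtain ⟨g, hg, hg31⟩ := exists_nonzero31 M hirr
  set ψ : Fin 3 → F := fun j => ((g⁻¹ : GL (Fin 3) F) : Matrix (Fin 3) (Fin 3) F) 2 j with hψ
  have hψ0 : ψ 0 ≠ 0 := hg31
  have hA : ∀ (u : Fin 3 → F) (hu : ψ ⬝ᵥ u = 0), tgl u ψ hu ∈ M := by
    intro u hu
    set x : Fin 3 → F := ((g⁻¹ : GL (Fin 3) F) : Matrix (Fin 3) (Fin 3) F) *ᵥ u with hx
    have hx2 : x 2 = 0 := by
      rw [hx]
      simpa [Matrix.mulVec, dotProduct, hψ] using hu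
    have horth : (![0,0,1] : Fin 3 → F) ⬝ᵥ x = 0 := by
      simp [dotProduct, Fin.sum_univ_three, hx2]
    have hmem := hT2 M hU x hx2 horth
    have hconj : g * tgl x ![0,0,1] horth * g⁻¹ ∈ M := mul_mem (mul_mem hg hmem) (inv_mem hg)
    apply mem_of_val_eq hconj
    have hvec : (g : Matrix (Fin 3) (Fin 3) F) *ᵥ x = u := by
      rw [hx, Matrix.mulVec_mulVec, ← Units.val_mul, mul_inv_cancel, Units.val_one,
        Matrix.one_mulVec]
    have hfun : (![0,0,1] : Fin 3 → F) ᵥ* ((g⁻¹ : GL (Fin 3) F) : Matrix (Fin 3) (Fin 3) F)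
        = ψ := by
      ext j
      simp [Matrix.vecMul, dotProduct, Fin.sum_univ_three, hψ, Matrix.vecHead, Matrix.vecTail]
    rw [tgl_val, conj_tgl_val, hvec, hfun]
  set c : F := ψ 0 with hc
  -- Step B : all transvections with χ 0 = c
  have hB : ∀ (u χ' : Fin 3 → F) (hu : χ' ⬝ᵥ u = 0), χ' 0 = c → tgl u χ' hu ∈ M := by
    intro u χ' hu hχ'0
    set φ : Fin 3 → F := c⁻¹ • (ψ - χ') with hφ
    have hφ0 : φ 0 = 0 := by
      simp [hφ, hχ'0, hc]
    have hφe0 : φ ⬝ᵥ (![1,0,0] : Fin 3 → F) = 0 := by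
      simp [dotProduct, Fin.sum_univ_three, hφ0]
    set w : Fin 3 → F := u - (c⁻¹ * (ψ ⬝ᵥ u)) • ![1,0,0] with hw
    have hψe0 : ψ ⬝ᵥ (![1,0,0] : Fin 3 → F) = c := by
      simp [dotProduct, Fin.sum_univ_three, hc]
    have hχe0 : χ' ⬝ᵥ (![1,0,0] : Fin 3 → F) = c := by
      simp [dotProduct, Fin.sum_univ_three, hχ'0]
    have hψw : ψ ⬝ᵥ w = 0 := by
      rw [hw, dotProduct_sub, dotProduct_smul, hψe0]
      rw [smul_eq_mul]
      field_simp
      ring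
    have hχw : χ' ⬝ᵥ w = -(ψ ⬝ᵥ u) := by
      rw [hw, dotProduct_sub, dotProduct_smul, hχe0, hu]
      rw [smul_eq_mul]
      field_simp
      ring
    have hφw : φ ⬝ᵥ w = c⁻¹ * (ψ ⬝ᵥ u) := by
      rw [hφ, smul_dotProduct, sub_dotProduct, hψw, hχw, smul_eq_mul]
      ring
    have hE := hT1 M hU φ hφ0 hφe0
    have hWmem := hA w hψw
    have hconj : tgl ![1,0,0] φ hφe0 * tgl w ψ hψw * (tgl ![1,0,0] φ hφe0)⁻¹ ∈ M :=
      mul_mem (mul_mem hE hWmem) (inv_mem hE)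
    apply mem_of_val_eq hconj
    have hvec : ((tgl ![1,0,0] φ hφe0 : GL (Fin 3) F) : Matrix (Fin 3) (Fin 3) F) *ᵥ w = u := by
      rw [tgl_val, Matrix.add_mulVec, Matrix.one_mulVec, vecMulVec_mulVec', hφw, hw]
      abel
    have hfun : ψ ᵥ* (((tgl ![1,0,0] φ hφe0)⁻¹ : GL (Fin 3) F) : Matrix (Fin 3) (Fin 3) F)
        = χ' := by
      rw [tgl_inv_val, Matrix.vecMul_sub, Matrix.vecMul_one, vecMul_vecMulVec, hψe0, hφ,
        smul_smul, mul_inv_cancel₀ hψ0, one_smul]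
      abel
    rw [tgl_val, conj_tgl_val, hvec, hfun]
  -- Step C1 : all transvections with χ 0 ≠ 0
  have hC1 : ∀ (u χ' : Fin 3 → F) (hu : χ' ⬝ᵥ u = 0), χ' 0 ≠ 0 → tgl u χ' hu ∈ M := by
    intro u χ' hu hχ'0
    set s : F := c / χ' 0 with hs
    have hsne : s ≠ 0 := div_ne_zero hψ0 hχ'0
    have horth : (s • χ') ⬝ᵥ (s⁻¹ • u) = 0 := by
      rw [smul_dotProduct, dotProduct_smul, hu]
      simp
    have h0 : (s • χ') 0 = c := by
      simp [hs]
      field_simp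
    have hmem := hB (s⁻¹ • u) (s • χ') horth h0
    apply mem_of_val_eq hmem
    rw [tgl_val, tgl_val]
    congr 1
    rw [smul_vecMulVec, vecMulVec_smul, smul_smul, inv_mul_cancel₀ hsne, one_smul]
  -- Step C : general case
  by_cases hz : χ 0 ≠ 0
  · exact hC1 v χ h hz
  push_neg at hz
  by_cases hzero : χ = 0
  · apply mem_of_val_eq (one_mem M)
    rw [tgl_val, hzero]
    ext i j
    simp [vecMulVec_apply, Units.val_one]
  -- χ 0 = 0, χ ≠ 0 : pick i ∈ {1,2} with χ i ≠ 0
  have hi : χ 1 ≠ 0 ∨ χ 2 ≠ 0 := by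
    by_contra hcon
    push_neg at hcon
    apply hzero
    funext k
    fin_cases k <;> simp [hz, hcon.1, hcon.2]
  set w : Fin 3 → F := if χ 1 ≠ 0 then ![0,1,0] else ![0,0,1] with hwdef
  have hχw : χ ⬝ᵥ w ≠ 0 := by
    rw [hwdef]
    split_ifs with h1
    · simpa [dotProduct, Fin.sum_univ_three] using h1
    · have h2 : χ 2 ≠ 0 := hi.resolve_left h1
      simpa [dotProduct, Fin.sum_univ_three] using h2
  have hw0 : w 0 = 0 := by
    rw [hwdef]; split_ifs <;> simp
  set ε : Fin 3 → F := ![1,0,0] with hεdef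
  have hεw : ε ⬝ᵥ w = 0 := by
    simp [hεdef, dotProduct, Fin.sum_univ_three, hw0]
  have hε0 : ε 0 ≠ 0 := by simp [hεdef]
  have hEmem : tgl w ε hεw ∈ M := hC1 w ε hεw hε0
  set v' : Fin 3 → F := v - (v 0) • w with hv'
  set χ' : Fin 3 → F := χ + (χ ⬝ᵥ w) • ε with hχ'
  have hεv : ε ⬝ᵥ v = v 0 := by simp [hεdef, dotProduct, Fin.sum_univ_three]
  have hεv' : ε ⬝ᵥ v' = v 0 := by
    rw [hv', dotProduct_sub, dotProduct_smul, hεv, hεw, smul_eq_mul]; ring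
  have hχ'w : χ' ⬝ᵥ w = χ ⬝ᵥ w := by
    rw [hχ', add_dotProduct, smul_dotProduct, hεw, smul_eq_mul]; ring
  have hχ'0 : χ' 0 ≠ 0 := by
    have : χ' 0 = χ ⬝ᵥ w := by
      simp [hχ', hεdef, hz, Matrix.vecHead, Matrix.vecTail]
    rwa [this]
  have horth' : χ' ⬝ᵥ v' = 0 := by
    rw [hχ', hv', add_dotProduct, smul_dotProduct, dotProduct_sub, dotProduct_sub,
      dotProduct_smul, dotProduct_smul, h, hεv, hεw]
    simp only [smul_eq_mul, mul_zero, smul_zero, neg_zero]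
    ring
  have hinner : tgl v' χ' horth' ∈ M := hC1 v' χ' horth' hχ'0
  have hconj : tgl w ε hεw * tgl v' χ' horth' * (tgl w ε hεw)⁻¹ ∈ M :=
    mul_mem (mul_mem hEmem hinner) (inv_mem hEmem)
  apply mem_of_val_eq hconj
  have hvec : ((tgl w ε hεw : GL (Fin 3) F) : Matrix (Fin 3) (Fin 3) F) *ᵥ v' = v := by
    rw [tgl_val, Matrix.add_mulVec, Matrix.one_mulVec, vecMulVec_mulVec', hεv', hv']
    abel
  have hfun : χ' ᵥ* (((tgl w ε hεw)⁻¹ : GL (Fin 3) F) : Matrix (Fin 3) (Fin 3) F) = χ := by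
    rw [tgl_inv_val, Matrix.vecMul_sub, Matrix.vecMul_one, vecMul_vecMulVec, hχ'w, hχ']
    abel
  rw [tgl_val, conj_tgl_val, hvec, hfun]


include hirr hU in
lemma transvectionStruct_mem (t : Matrix.TransvectionStruct (Fin 3) F) :
    ∃ x : GL (Fin 3) F, x ∈ M ∧
      (x : Matrix (Fin 3) (Fin 3) F) = Matrix.TransvectionStruct.toMatrix t := by
  have horth : (Pi.single t.j 1 : Fin 3 → F) ⬝ᵥ Pi.single t.i t.c = 0 := by
    simp [dotProduct, Pi.single_apply, Finset.sum_ite_eq]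
    intro h
    exact absurd h t.hij
  refine ⟨tgl (Pi.single t.i t.c) (Pi.single t.j 1) horth,
    all_transvections M hirr hU _ _ horth, ?_⟩
  rw [tgl_val, show Matrix.TransvectionStruct.toMatrix t = Matrix.transvection t.i t.j t.c from rfl,
    Matrix.transvection]
  congr 1
  ext k l
  rw [vecMulVec_apply]
  by_cases h1 : t.i = k <;> by_cases h2 : t.j = l <;>
    simp [Pi.single_apply, Matrix.single, h1, h2, Ne.symm, eq_comm]

include hirr hU in
lemma list_transvec_mem (L : List (Matrix.TransvectionStruct (Fin 3) F)) :
    ∃ x : GL (Fin 3) F, x ∈ M ∧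
      (x : Matrix (Fin 3) (Fin 3) F)
        = (L.map Matrix.TransvectionStruct.toMatrix).prod := by
  induction L with
  | nil => exact ⟨1, one_mem M, by simp⟩
  | cons t L ih =>
    obtain ⟨x, hx, hxval⟩ := ih
    obtain ⟨y, hy, hyval⟩ := transvectionStruct_mem M hirr hU t
    exact ⟨y * x, mul_mem hy hx, by simp [Units.val_mul, hxval, hyval]⟩

include hirr hU in
lemma wElt_mem (x : F) (hx : x ≠ 0) (h1 : (![0,1,0] : Fin 3 → F) ⬝ᵥ (x • ![1,0,0]) = 0)
    (h2 : (![1,0,0] : Fin 3 → F) ⬝ᵥ ((-x⁻¹) • ![0,1,0]) = 0) :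
    ∃ y : GL (Fin 3) F, y ∈ M ∧
      (y : Matrix (Fin 3) (Fin 3) F) = !![0, x, 0; -x⁻¹, 0, 0; 0, 0, 1] := by
  refine ⟨tgl (x • ![1,0,0]) ![0,1,0] h1 * tgl ((-x⁻¹) • ![0,1,0]) ![1,0,0] h2 *
    tgl (x • ![1,0,0]) ![0,1,0] h1,
    mul_mem (mul_mem (all_transvections M hirr hU _ _ h1)
      (all_transvections M hirr hU _ _ h2)) (all_transvections M hirr hU _ _ h1), ?_⟩
  rw [Units.val_mul, Units.val_mul, tgl_val, tgl_val]
  ext i j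
  fin_cases i <;> fin_cases j <;>
    (simp [vecMulVec_apply, mul_apply, Fin.sum_univ_three, Matrix.one_apply,
      Matrix.vecHead, Matrix.vecTail]
     <;> field_simp <;> simp)

include hirr hU in
lemma wElt12_mem (x : F) (hx : x ≠ 0) (h1 : (![0,0,1] : Fin 3 → F) ⬝ᵥ (x • ![0,1,0]) = 0)
    (h2 : (![0,1,0] : Fin 3 → F) ⬝ᵥ ((-x⁻¹) • ![0,0,1]) = 0) :
    ∃ y : GL (Fin 3) F, y ∈ M ∧
      (y : Matrix (Fin 3) (Fin 3) F) = !![1, 0, 0; 0, 0, x; 0, -x⁻¹, 0] := by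
  refine ⟨tgl (x • ![0,1,0]) ![0,0,1] h1 * tgl ((-x⁻¹) • ![0,0,1]) ![0,1,0] h2 *
    tgl (x • ![0,1,0]) ![0,0,1] h1,
    mul_mem (mul_mem (all_transvections M hirr hU _ _ h1)
      (all_transvections M hirr hU _ _ h2)) (all_transvections M hirr hU _ _ h1), ?_⟩
  rw [Units.val_mul, Units.val_mul, tgl_val, tgl_val]
  ext i j
  fin_cases i <;> fin_cases j <;>
    (simp [vecMulVec_apply, mul_apply, Fin.sum_univ_three, Matrix.one_apply,
      Matrix.vecHead, Matrix.vecTail]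
     <;> field_simp <;> simp)

include hirr hU in
lemma diag01_mem (a : F) (ha : a ≠ 0) :
    ∃ y : GL (Fin 3) F, y ∈ M ∧
      (y : Matrix (Fin 3) (Fin 3) F) = diagonal ![a, a⁻¹, 1] := by
  have horth1 : (![0,1,0] : Fin 3 → F) ⬝ᵥ (a • ![1,0,0]) = 0 := by
    simp [dotProduct, Fin.sum_univ_three]
  have horth2 : (![1,0,0] : Fin 3 → F) ⬝ᵥ ((-a⁻¹) • ![0,1,0]) = 0 := by
    simp [dotProduct, Fin.sum_univ_three]
  have horth1' : (![0,1,0] : Fin 3 → F) ⬝ᵥ ((-1 : F) • ![1,0,0]) = 0 := by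
    simp [dotProduct, Fin.sum_univ_three]
  have horth2' : (![1,0,0] : Fin 3 → F) ⬝ᵥ ((-(-1 : F)⁻¹) • ![0,1,0]) = 0 := by
    simp [dotProduct, Fin.sum_univ_three]
  obtain ⟨y1, hy1, hy1val⟩ := wElt_mem M hirr hU a ha horth1 horth2
  obtain ⟨y2, hy2, hy2val⟩ := wElt_mem M hirr hU (-1) (by norm_num) horth1' horth2'
  refine ⟨y1 * y2, mul_mem hy1 hy2, ?_⟩
  rw [Units.val_mul, hy1val, hy2val]
  ext i j
  fin_cases i <;> fin_cases j <;>
    simp [mul_apply, Fin.sum_univ_three, Matrix.diagonal, Matrix.vecHead, Matrix.vecTail,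
      inv_neg_one]

include hirr hU in
lemma diag12_mem (b : F) (hb : b ≠ 0) :
    ∃ y : GL (Fin 3) F, y ∈ M ∧
      (y : Matrix (Fin 3) (Fin 3) F) = diagonal ![1, b, b⁻¹] := by
  have horth1 : (![0,0,1] : Fin 3 → F) ⬝ᵥ (b • ![0,1,0]) = 0 := by
    simp [dotProduct, Fin.sum_univ_three]
  have horth2 : (![0,1,0] : Fin 3 → F) ⬝ᵥ ((-b⁻¹) • ![0,0,1]) = 0 := by
    simp [dotProduct, Fin.sum_univ_three]
  have horth1' : (![0,0,1] : Fin 3 → F) ⬝ᵥ ((-1 : F) • ![0,1,0]) = 0 := by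
    simp [dotProduct, Fin.sum_univ_three]
  have horth2' : (![0,1,0] : Fin 3 → F) ⬝ᵥ ((-(-1 : F)⁻¹) • ![0,0,1]) = 0 := by
    simp [dotProduct, Fin.sum_univ_three]
  obtain ⟨y1, hy1, hy1val⟩ := wElt12_mem M hirr hU b hb horth1 horth2
  obtain ⟨y2, hy2, hy2val⟩ := wElt12_mem M hirr hU (-1) (by norm_num) horth1' horth2'
  refine ⟨y1 * y2, mul_mem hy1 hy2, ?_⟩
  rw [Units.val_mul, hy1val, hy2val]
  ext i j
  fin_cases i <;> fin_cases j <;>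
    simp [mul_apply, Fin.sum_univ_three, Matrix.diagonal, Matrix.vecHead, Matrix.vecTail,
      inv_neg_one]

include hirr hU in
lemma diagonal_mem (D : Fin 3 → F) (hD : D 0 * D 1 * D 2 = 1) (x : GL (Fin 3) F)
    (hx : (x : Matrix (Fin 3) (Fin 3) F) = diagonal D) : x ∈ M := by
  have h0 : D 0 ≠ 0 := by intro h; rw [h] at hD; simp at hD
  have h1 : D 1 ≠ 0 := by intro h; rw [h] at hD; simp at hD
  have h01 : D 0 * D 1 ≠ 0 := mul_ne_zero h0 h1
  have h2 : D 2 = (D 0 * D 1)⁻¹ := by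
    field_simp
    linear_combination hD
  obtain ⟨y1, hy1, hy1val⟩ := diag01_mem M hirr hU (D 0) h0
  obtain ⟨y2, hy2, hy2val⟩ := diag12_mem M hirr hU (D 0 * D 1) h01
  apply mem_of_val_eq (mul_mem hy1 hy2)
  rw [hx, Units.val_mul, hy1val, hy2val]
  ext i j
  fin_cases i <;> fin_cases j <;>
    (simp [mul_apply, Fin.sum_univ_three, Matrix.diagonal, Matrix.vecHead, Matrix.vecTail, h2]
     <;> field_simp)

include hirr hU in
lemma det_one_mem (g : GL (Fin 3) F) (hg : Matrix.det (g : Matrix (Fin 3) (Fin 3) F) = 1) :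
    g ∈ M := by
  obtain ⟨L, L', D, hfact⟩ :=
    Matrix.Pivot.exists_list_transvec_mul_mul_list_transvec_eq_diagonal
      (g : Matrix (Fin 3) (Fin 3) F)
  obtain ⟨x, hx, hxval⟩ := list_transvec_mem M hirr hU L
  obtain ⟨y, hy, hyval⟩ := list_transvec_mem M hirr hU L'
  have hval : ((x * g * y : GL (Fin 3) F) : Matrix (Fin 3) (Fin 3) F) = diagonal D := by
    rw [Units.val_mul, Units.val_mul, hxval, hyval]
    exact hfact
  have hdetD : D 0 * D 1 * D 2 = 1 := by
    have : Matrix.det (diagonal D) = 1 := by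
      rw [← hval, Units.val_mul, Units.val_mul, Matrix.det_mul, Matrix.det_mul,
        hxval, hyval, hg]
      simp
    rw [Matrix.det_diagonal, Fin.prod_univ_three] at this
    exact this
  have hmem : x * g * y ∈ M := diagonal_mem M hirr hU D hdetD _ hval
  have : g = x⁻¹ * (x * g * y) * y⁻¹ := by group
  rw [this]
  exact mul_mem (mul_mem (inv_mem hx) hmem) (inv_mem hy)

end core

end SylowGL

open SylowGL Pointwise

/-- An irreducible subgroup `M ≤ GL₃(F_q)` (`q ≥ 7`) with `q² ∣ |M|`, surjective
determinant, containing a Sylow `p`-subgroup of `GL₃(F_q)`, contains `SL₃(F_q)` and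
hence equals `GL₃(F_q)`. -/
theorem irreducible_subgroup_with_sylow_eq_top
    {F : Type*} [Field F] [Fintype F] [DecidableEq F]
    (p : ℕ) [Fact p.Prime] [CharP F p] (hq : 7 ≤ Fintype.card F)
    (M : Subgroup (Matrix.GeneralLinearGroup (Fin 3) F))
    (hirr : ∀ W : Submodule F (Fin 3 → F),
      (∀ g ∈ M, ∀ v ∈ W, Matrix.mulVec (g : Matrix (Fin 3) (Fin 3) F) v ∈ W) →
      W = ⊥ ∨ W = ⊤)
    (hcard : Fintype.card F ^ 2 ∣ Nat.card M)
    (hdet : ∀ u : Fˣ, ∃ g ∈ M, Matrix.GeneralLinearGroup.det g = u)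
    (hsyl : ∃ P : Sylow p (Matrix.GeneralLinearGroup (Fin 3) F), (P : Subgroup _) ≤ M) :
    MonoidHom.ker
        (Matrix.GeneralLinearGroup.det :
          Matrix.GeneralLinearGroup (Fin 3) F →* Fˣ) ≤ M ∧ M = ⊤ := by
  classical
  obtain ⟨P, hP⟩ := hsyl
  obtain ⟨Q, hUQ⟩ := (isPGroup_U (F := F) p).exists_le_sylow
  obtain ⟨c, hc⟩ := MulAction.exists_smul_eq (GL (Fin 3) F) P Q
  set M' : Subgroup (GL (Fin 3) F) := MulAut.conj c • M with hM'
  have hmemM' : ∀ x : GL (Fin 3) F, x ∈ M' ↔ c⁻¹ * x * c ∈ M := by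
    intro x
    rw [hM', Subgroup.mem_pointwise_smul_iff_inv_smul_mem]
    constructor
    · intro h; simpa [MulAut.conj_inv_apply] using h
    · intro h; simpa [MulAut.conj_inv_apply] using h
  have hM'U : ∀ a b d : F, uGL a b d ∈ M' := by
    intro a b d
    have h1 : uGL a b d ∈ (U : Subgroup (GL (Fin 3) F)) := ⟨a, b, d, rfl⟩
    have h2 : uGL a b d ∈ (Q : Subgroup (GL (Fin 3) F)) := hUQ h1
    rw [← hc, Sylow.coe_subgroup_smul, Subgroup.mem_pointwise_smul_iff_inv_smul_mem] at h2
    have h3 : c⁻¹ * uGL a b d * c ∈ (P : Subgroup (GL (Fin 3) F)) := by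
      simpa [MulAut.conj_inv_apply] using h2
    rw [hmemM']
    exact hP h3
  have hirr' : ∀ W : Submodule F (Fin 3 → F),
      (∀ g ∈ M', ∀ v ∈ W, Matrix.mulVec (g : Matrix (Fin 3) (Fin 3) F) v ∈ W) →
      W = ⊥ ∨ W = ⊤ := by
    intro W hWinv
    set cm : Matrix (Fin 3) (Fin 3) F := (c : Matrix (Fin 3) (Fin 3) F) with hcm
    set cm' : Matrix (Fin 3) (Fin 3) F := ((c⁻¹ : GL (Fin 3) F) : Matrix (Fin 3) (Fin 3) F)
      with hcm'
    have hcc : cm * cm' = 1 := by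
      rw [hcm, hcm', ← Units.val_mul, mul_inv_cancel, Units.val_one]
    have hcc' : cm' * cm = 1 := by
      rw [hcm, hcm', ← Units.val_mul, inv_mul_cancel, Units.val_one]
    let W0 : Submodule F (Fin 3 → F) := W.comap (Matrix.mulVecLin cm)
    have hW0 : ∀ g ∈ M, ∀ v ∈ W0, Matrix.mulVec (g : Matrix (Fin 3) (Fin 3) F) v ∈ W0 := by
      intro g hg v hv
      have hg' : (c * g * c⁻¹ : GL (Fin 3) F) ∈ M' := by
        rw [hmemM']
        have : c⁻¹ * (c * g * c⁻¹) * c = g := by group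
        rwa [this]
      have hv' : cm *ᵥ v ∈ W := hv
      have hstep := hWinv _ hg' _ hv'
      have heq : ((c * g * c⁻¹ : GL (Fin 3) F) : Matrix (Fin 3) (Fin 3) F) *ᵥ (cm *ᵥ v)
          = cm *ᵥ ((g : Matrix (Fin 3) (Fin 3) F) *ᵥ v) := by
        rw [Matrix.mulVec_mulVec, Matrix.mulVec_mulVec]
        have hm : ((c * g * c⁻¹ : GL (Fin 3) F) : Matrix (Fin 3) (Fin 3) F) * cm
            = cm * ((g : GL (Fin 3) F) : Matrix (Fin 3) (Fin 3) F) := by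
          rw [Units.val_mul, Units.val_mul, ← hcm, ← hcm', mul_assoc, mul_assoc, hcc', mul_one]
        rw [hm]
      rw [heq] at hstep
      exact hstep
    rcases hirr W0 hW0 with hbot | htop
    · left
      rw [eq_bot_iff]
      intro v hv
      have h1 : cm' *ᵥ v ∈ W0 := by
        show cm *ᵥ (cm' *ᵥ v) ∈ W
        rw [Matrix.mulVec_mulVec, hcc, Matrix.one_mulVec]
        exact hv
      rw [hbot, Submodule.mem_bot] at h1
      have : v = cm *ᵥ (cm' *ᵥ v) := by
        rw [Matrix.mulVec_mulVec, hcc, Matrix.one_mulVec]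
      rw [Submodule.mem_bot, this, h1, Matrix.mulVec_zero]
    · right
      rw [eq_top_iff]
      intro v _
      have h1 : cm' *ᵥ v ∈ W0 := htop ▸ Submodule.mem_top
      have h2 : cm *ᵥ (cm' *ᵥ v) ∈ W := h1
      rwa [Matrix.mulVec_mulVec, hcc, Matrix.one_mulVec] at h2
  have hcore : ∀ g : GL (Fin 3) F,
      Matrix.det (g : Matrix (Fin 3) (Fin 3) F) = 1 → g ∈ M' :=
    det_one_mem M' hirr' hM'U
  have hker : MonoidHom.ker
      (Matrix.GeneralLinearGroup.det :
        Matrix.GeneralLinearGroup (Fin 3) F →* Fˣ) ≤ M := by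
    intro x hx
    rw [MonoidHom.mem_ker] at hx
    have hdx : Matrix.GeneralLinearGroup.det (c * x * c⁻¹ : GL (Fin 3) F) = 1 := by
      rw [_root_.map_mul, _root_.map_mul, _root_.map_inv, hx, mul_one, mul_inv_cancel]
    have hdx' : Matrix.det ((c * x * c⁻¹ : GL (Fin 3) F) : Matrix (Fin 3) (Fin 3) F) = 1 := by
      have := congrArg Units.val hdx
      rwa [Matrix.GeneralLinearGroup.val_det_apply, Units.val_one] at this
    have hmem := hcore _ hdx'
    rw [hmemM'] at hmem
    have : c⁻¹ * (c * x * c⁻¹) * c = x := by group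
    rwa [this] at hmem
  refine ⟨hker, ?_⟩
  rw [eq_top_iff]
  intro g _
  obtain ⟨m, hm, hmd⟩ := hdet (Matrix.GeneralLinearGroup.det g)
  have hker' : g * m⁻¹ ∈ MonoidHom.ker
      (Matrix.GeneralLinearGroup.det :
        Matrix.GeneralLinearGroup (Fin 3) F →* Fˣ) := by
    rw [MonoidHom.mem_ker, _root_.map_mul, _root_.map_inv, hmd, mul_inv_cancel]
  have : g = (g * m⁻¹) * m := by group
  rw [this]
  exact mul_mem (hker hker') hm
end
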